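/- If no node feature equals the zero vector and w(l) > 0 for all l, then TD_w(T_a, T_b) = 0 implies T_a = T_b (the two rooted trees are isomorphic as labelled rooted trees), for trees of equal finite depth. -/

import Mathlib

open scoped BigOperators


noncomputable section

/-- Unnormalized optimal transport between equal-cardinality multisets (represented
as lists): the minimum over bijective matchings of the summed ground costs. -/
noncomputable def listOT {α : Type*} (d : α → α → ℝ) (X Y : List α) : ℝ :=
  sInf {c : ℝ | ∃ Y' : List α, Y.Perm Y' ∧ c = (List.zipWith d X Y').sum}

/-- Blank augmentation `ρ`: pad the smaller multiset with copies of the blank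
element `b` so that both multisets have equal cardinality. -/
def pad {α : Type*} (b : α) (X Y : List α) : List α × List α :=
  (X ++ List.replicate (Y.length - X.length) b,
   Y ++ List.replicate (X.length - Y.length) b)

/-- Blank-augmented unnormalized optimal transport `OT_d(ρ(X, Y))`. -/
noncomputable def otPad {α : Type*} (d : α → α → ℝ) (b : α) (X Y : List α) : ℝ :=
  listOT d (pad b X Y).1 (pad b X Y).2

/-- Rooted trees with node features in `ℝ^p`; children are recorded as a list
(representing the multiset of child subtrees). -/
inductive RTree (p : ℕ) : Type
  | node : EuclideanSpace ℝ (Fin p) → List (RTree p) → RTree p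

namespace RTree

variable {p : ℕ}

/-- The blank tree: a single node with zero feature vector and no children. -/
def blank : RTree p := node 0 []

mutual
  /-- Depth of a rooted tree (a single node has depth 1). -/
  def depth : RTree p → ℕ
    | node _ cs => 1 + depthList cs
  /-- Maximal depth of a list of trees. -/
  def depthList : List (RTree p) → ℕ
    | [] => 0
    | t :: ts => max (depth t) (depthList ts)
end

/-- Tree distance with recursion fuel: `tdAux w n` computes the hierarchical-OT
tree distance `TD_w` correctly whenever `n` is at least the maximal depth. -/
noncomputable def tdAux (w : ℕ → ℝ) : ℕ → RTree p → RTree p → ℝ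
  | 0, _, _ => 0
  | n + 1, node x cs, node y ds =>
      ‖x - y‖ +
        (if 1 < max (node x cs).depth (node y ds).depth then
          w (max (node x cs).depth (node y ds).depth) * otPad (tdAux w n) blank cs ds
        else 0)

/-- The tree distance `TD_w`: distance of root features, plus `w(L)` times the
blank-augmented unnormalized OT between the multisets of child subtrees (with
`TD_w` as the recursive ground cost), `L` being the maximum depth. -/
noncomputable def TD (w : ℕ → ℝ) (Ta Tb : RTree p) : ℝ :=
  tdAux w (max Ta.depth Tb.depth) Ta Tb

/-- Number of nodes at a level of the tree (level `0` is the root, so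
`Width_l(T) = widthAt T (l-1)` in 1-indexed level notation). -/
def widthAt : RTree p → ℕ → ℕ
  | _, 0 => 1
  | node _ cs, l + 1 => (cs.map (fun c => widthAt c l)).sum
termination_by t l => l

/-- Every node feature in the tree is nonzero. -/
inductive NoZero : RTree p → Prop
  | node {x : EuclideanSpace ℝ (Fin p)} {cs : List (RTree p)} :
      x ≠ 0 → (∀ t ∈ cs, NoZero t) → NoZero (RTree.node x cs)

/-- Equivalence of rooted labelled trees up to reordering of children (fuel
version). -/
def equivAux : ℕ → RTree p → RTree p → Prop
  | 0, _, _ => True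
  | n + 1, node x cs, node y ds =>
      x = y ∧ ∃ ds' : List (RTree p), ds.Perm ds' ∧ List.Forall₂ (equivAux n) cs ds'

/-- Two rooted labelled trees are isomorphic: equal roots and children match up
to a bijection level by level. -/
def Equiv' (Ta Tb : RTree p) : Prop := equivAux (max Ta.depth Tb.depth) Ta Tb

end RTree

/-- Depth-`(k+1)` computation tree of node `v`: `compTree G x 0 v` is the single
node `v` with its feature, and the level-`(k+1)` tree attaches the depth-`k`
computation trees of the neighbors of `v`. -/
noncomputable def compTree {V : Type*} [Fintype V] {p : ℕ} (G : SimpleGraph V)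
    [DecidableRel G.Adj] (x : V → EuclideanSpace ℝ (Fin p)) : ℕ → V → RTree p
  | 0, v => RTree.node (x v) []
  | k + 1, v => RTree.node (x v) (((G.neighborFinset v).val.toList).map (compTree G x k))

/-- Tree Mover's Distance `TMD_w^L`: blank-augmented unnormalized OT between the
multisets of depth-`L` computation trees of the two attributed graphs, with the
hierarchical tree distance `TD_w` as ground cost. -/
noncomputable def TMD {Va Vb : Type*} [Fintype Va] [Fintype Vb] {p : ℕ}
    (w : ℕ → ℝ) (L : ℕ)
    (Ga : SimpleGraph Va) [DecidableRel Ga.Adj] (xa : Va → EuclideanSpace ℝ (Fin p))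
    (Gb : SimpleGraph Vb) [DecidableRel Gb.Adj] (xb : Vb → EuclideanSpace ℝ (Fin p)) : ℝ :=
  otPad (RTree.TD w) RTree.blank
    ((Finset.univ.val.toList).map (compTree Ga xa (L - 1)))
    ((Finset.univ.val.toList).map (compTree Gb xb (L - 1)))


section Aux

open RTree List

variable {p : ℕ}

lemma depth_pos (T : RTree p) : 1 ≤ T.depth := by
  cases T with
  | node x cs => simp [RTree.depth]

lemma depthList_eq_zero {cs : List (RTree p)} (h : RTree.depthList cs = 0) : cs = [] := by
  cases cs with
  | nil => rfl
  | cons t ts =>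
    exfalso
    have h1 := depth_pos t
    simp only [RTree.depthList, Nat.max_eq_zero_iff] at h
    omega

lemma depth_le_depthList {t : RTree p} : ∀ {cs : List (RTree p)}, t ∈ cs →
    t.depth ≤ RTree.depthList cs := by
  intro cs
  induction cs with
  | nil => intro h; simp at h
  | cons a ts ih =>
    intro h
    rcases List.mem_cons.mp h with rfl | h
    · simp [RTree.depthList]
    · simp only [RTree.depthList]
      exact le_trans (ih h) (le_max_right _ _)

lemma zipWith_sum_nonneg {α : Type*} (d : α → α → ℝ) (hd : ∀ a b, 0 ≤ d a b) :
    ∀ (X Y : List α), 0 ≤ (List.zipWith d X Y).sum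
  | [], _ => by simp
  | _ :: _, [] => by simp
  | a :: X, b :: Y => by
    simp only [List.zipWith_cons_cons, List.sum_cons]
    exact add_nonneg (hd a b) (zipWith_sum_nonneg d hd X Y)

lemma listOT_nonneg {α : Type*} (d : α → α → ℝ) (hd : ∀ a b, 0 ≤ d a b) (X Y : List α) :
    0 ≤ listOT d X Y :=
  Real.sInf_nonneg (by rintro c ⟨Y', -, rfl⟩; exact zipWith_sum_nonneg d hd X Y')

lemma otPad_nonneg {α : Type*} (d : α → α → ℝ) (hd : ∀ a b, 0 ≤ d a b) (b : α) (X Y : List α) :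
    0 ≤ otPad d b X Y :=
  listOT_nonneg d hd _ _

lemma tdAux_nonneg (w : ℕ → ℝ) (hw : ∀ l, 0 ≤ w l) :
    ∀ (n : ℕ) (T1 T2 : RTree p), 0 ≤ RTree.tdAux w n T1 T2
  | 0, _, _ => le_refl 0
  | n + 1, RTree.node x cs, RTree.node y ds => by
    rw [RTree.tdAux]
    apply add_nonneg (norm_nonneg _)
    split
    · exact mul_nonneg (hw _) (otPad_nonneg _ (tdAux_nonneg w hw n) _ _ _)
    · exact le_refl 0

lemma forall₂_of_zipWith_sum_eq_zero {α : Type*} (d : α → α → ℝ) (hd : ∀ a b, 0 ≤ d a b) :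
    ∀ (X Y : List α), X.length = Y.length → (List.zipWith d X Y).sum = 0 →
      List.Forall₂ (fun a b => d a b = 0) X Y
  | [], [], _, _ => List.Forall₂.nil
  | [], _ :: _, hl, _ => by simp at hl
  | _ :: _, [], hl, _ => by simp at hl
  | a :: X, b :: Y, hl, hs => by
    simp only [List.zipWith_cons_cons, List.sum_cons] at hs
    have h1 : 0 ≤ d a b := hd a b
    have h2 : 0 ≤ (List.zipWith d X Y).sum := zipWith_sum_nonneg d hd X Y
    have hab : d a b = 0 := by linarith
    have hrest : (List.zipWith d X Y).sum = 0 := by linarith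
    exact List.Forall₂.cons hab
      (forall₂_of_zipWith_sum_eq_zero d hd X Y (by simpa using hl) hrest)

lemma forall₂_mem_left {α β : Type*} {R : α → β → Prop} :
    ∀ {X : List α} {Y : List β}, List.Forall₂ R X Y → ∀ a ∈ X, ∃ b ∈ Y, R a b := by
  intro X Y h
  induction h with
  | nil => simp
  | @cons a b X Y hr _ ih =>
    intro c hc
    rcases List.mem_cons.mp hc with rfl | hc
    · exact ⟨b, List.mem_cons_self, hr⟩
    · rcases ih c hc with ⟨b', hb', hrb⟩
      exact ⟨b', List.mem_cons_of_mem _ hb', hrb⟩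

lemma forall₂_mem_right {α β : Type*} {R : α → β → Prop} :
    ∀ {X : List α} {Y : List β}, List.Forall₂ R X Y → ∀ b ∈ Y, ∃ a ∈ X, R a b := by
  intro X Y h
  induction h with
  | nil => simp
  | @cons a b X Y hr _ ih =>
    intro c hc
    rcases List.mem_cons.mp hc with rfl | hc
    · exact ⟨a, List.mem_cons_self, hr⟩
    · rcases ih c hc with ⟨a', ha', hra⟩
      exact ⟨a', List.mem_cons_of_mem _ ha', hra⟩

lemma forall₂_mem_imp {α β : Type*} {R S : α → β → Prop} :
    ∀ {X : List α} {Y : List β}, List.Forall₂ R X Y →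
      (∀ a ∈ X, ∀ b ∈ Y, R a b → S a b) → List.Forall₂ S X Y := by
  intro X Y h
  induction h with
  | nil => intro _; exact List.Forall₂.nil
  | @cons a b X Y hr _ ih =>
    intro himp
    exact List.Forall₂.cons (himp _ (List.mem_cons_self) _ (List.mem_cons_self) hr)
      (ih fun a' ha' b' hb' => himp a' (List.mem_cons_of_mem _ ha') b' (List.mem_cons_of_mem _ hb'))

lemma listOT_eq_zero_exists {α : Type*} (d : α → α → ℝ) (hd : ∀ a b, 0 ≤ d a b)
    (X Y : List α) (hlen : X.length = Y.length) (h : listOT d X Y = 0) :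
    ∃ Y', Y.Perm Y' ∧ List.Forall₂ (fun a b => d a b = 0) X Y' := by
  have hne : {c : ℝ | ∃ Y' : List α, Y.Perm Y' ∧ c = (List.zipWith d X Y').sum}.Nonempty :=
    ⟨_, Y, List.Perm.refl Y, rfl⟩
  have hfin : {c : ℝ | ∃ Y' : List α, Y.Perm Y' ∧ c = (List.zipWith d X Y').sum}.Finite := by
    have hsub : {c : ℝ | ∃ Y' : List α, Y.Perm Y' ∧ c = (List.zipWith d X Y').sum} ⊆
        (fun Y' => (List.zipWith d X Y').sum) '' {Y' | Y' ∈ Y.permutations} := by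
      rintro c ⟨Y', hp, rfl⟩
      exact ⟨Y', by simpa [List.mem_permutations] using hp.symm, rfl⟩
    exact Set.Finite.subset (Set.Finite.image _ (Y.permutations.finite_toSet)) hsub
  have hmem : listOT d X Y ∈
      {c : ℝ | ∃ Y' : List α, Y.Perm Y' ∧ c = (List.zipWith d X Y').sum} := by
    rw [listOT]
    exact Set.Nonempty.csInf_mem hne hfin
  rw [h] at hmem
  obtain ⟨Y', hp, hsum⟩ := hmem
  exact ⟨Y', hp, forall₂_of_zipWith_sum_eq_zero d hd X Y'
    (hlen.trans hp.length_eq) hsum.symm⟩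

lemma noZero_feat {x : EuclideanSpace ℝ (Fin p)} {cs : List (RTree p)}
    (h : RTree.NoZero (RTree.node x cs)) : x ≠ 0 ∧ ∀ t ∈ cs, RTree.NoZero t := by
  cases h with
  | node hx hcs => exact ⟨hx, hcs⟩

lemma tdAux_blank_left_pos (w : ℕ → ℝ) (hw : ∀ l, 0 ≤ w l) {T : RTree p}
    (hT : RTree.NoZero T) {n : ℕ} (hn : 1 ≤ n) :
    0 < RTree.tdAux w n RTree.blank T := by
  obtain ⟨m, rfl⟩ : ∃ m, n = m + 1 := ⟨n - 1, by omega⟩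
  obtain ⟨z, es⟩ := T
  have hz : z ≠ 0 := (noZero_feat hT).1
  rw [RTree.blank, RTree.tdAux]
  apply add_pos_of_pos_of_nonneg
  · simpa [norm_sub_rev, norm_pos_iff] using hz
  · split
    · exact mul_nonneg (hw _) (otPad_nonneg _ (tdAux_nonneg w hw m) _ _ _)
    · exact le_refl 0

lemma tdAux_blank_right_pos (w : ℕ → ℝ) (hw : ∀ l, 0 ≤ w l) {T : RTree p}
    (hT : RTree.NoZero T) {n : ℕ} (hn : 1 ≤ n) :
    0 < RTree.tdAux w n T RTree.blank := by
  obtain ⟨m, rfl⟩ : ∃ m, n = m + 1 := ⟨n - 1, by omega⟩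
  obtain ⟨z, es⟩ := T
  have hz : z ≠ 0 := (noZero_feat hT).1
  rw [RTree.blank, RTree.tdAux]
  apply add_pos_of_pos_of_nonneg
  · simpa [norm_pos_iff, sub_eq_zero] using hz
  · split
    · exact mul_nonneg (hw _) (otPad_nonneg _ (tdAux_nonneg w hw m) _ _ _)
    · exact le_refl 0

lemma tdAux_zero_equiv (w : ℕ → ℝ) (hw : ∀ l, 0 < w l) :
    ∀ (n : ℕ) (Ta Tb : RTree p), RTree.NoZero Ta → RTree.NoZero Tb →
      max Ta.depth Tb.depth ≤ n → RTree.tdAux w n Ta Tb = 0 → RTree.equivAux n Ta Tb := by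
  have hw' : ∀ l, 0 ≤ w l := fun l => (hw l).le
  intro n
  induction n with
  | zero => intro Ta Tb _ _ _ _; exact trivial
  | succ n ih =>
    rintro ⟨x, cs⟩ ⟨y, ds⟩ ha hb hdep h0
    obtain ⟨hx, hacs⟩ := noZero_feat ha
    obtain ⟨hy, hbds⟩ := noZero_feat hb
    rw [RTree.tdAux] at h0
    have hite : (0:ℝ) ≤ if 1 < max (RTree.node x cs).depth (RTree.node y ds).depth then
        w (max (RTree.node x cs).depth (RTree.node y ds).depth) *
          otPad (RTree.tdAux w n) RTree.blank cs ds else 0 := by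
      split
      · exact mul_nonneg (hw' _) (otPad_nonneg _ (tdAux_nonneg w hw' n) _ _ _)
      · exact le_refl 0
    have hnorm : ‖x - y‖ = 0 := by
      have := norm_nonneg (x - y)
      linarith
    have hxy : x = y := by
      rwa [norm_eq_zero, sub_eq_zero] at hnorm
    have hite0 : (if 1 < max (RTree.node x cs).depth (RTree.node y ds).depth then
        w (max (RTree.node x cs).depth (RTree.node y ds).depth) *
          otPad (RTree.tdAux w n) RTree.blank cs ds else 0) = 0 := by linarith
    have hdepa : (RTree.node x cs).depth = 1 + RTree.depthList cs := rfl
    have hdepb : (RTree.node y ds).depth = 1 + RTree.depthList ds := rfl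
    by_cases hD : 1 < max (RTree.node x cs).depth (RTree.node y ds).depth
    · -- deep case
      rw [if_pos hD] at hite0
      have hot : otPad (RTree.tdAux w n) RTree.blank cs ds = 0 :=
        (mul_eq_zero.mp hite0).resolve_left (hw _).ne'
      have hn1 : 1 ≤ n := by
        rw [hdepa, hdepb] at hD hdep
        omega
      have hdLcs : RTree.depthList cs ≤ n := by
        rw [hdepa] at hdep; omega
      have hdLds : RTree.depthList ds ≤ n := by
        rw [hdepb] at hdep
        have := le_max_right (1 + RTree.depthList cs) (1 + RTree.depthList ds)
        omega
      rw [otPad] at hot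
      simp only [pad] at hot
      have hlen : (cs ++ List.replicate (ds.length - cs.length) RTree.blank).length =
          (ds ++ List.replicate (cs.length - ds.length) RTree.blank).length := by
        simp; omega
      obtain ⟨Y', hperm, hf⟩ := listOT_eq_zero_exists _ (tdAux_nonneg w hw' n) _ _ hlen hot
      rcases Nat.lt_trichotomy cs.length ds.length with hlt | heq | hgt
      · exfalso
        have hbl : RTree.blank ∈ cs ++ List.replicate (ds.length - cs.length) RTree.blank := by
          apply List.mem_append_right
          exact List.mem_replicate.mpr ⟨by omega, rfl⟩
        obtain ⟨b, hbY, hzero⟩ := forall₂_mem_left hf _ hbl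
        have hbds' : b ∈ ds := by
          have : b ∈ ds ++ List.replicate (cs.length - ds.length) RTree.blank :=
            (hperm.mem_iff).mpr hbY
          simpa [Nat.sub_eq_zero_of_le hlt.le] using this
        exact absurd hzero (tdAux_blank_left_pos w hw' (hbds b hbds') hn1).ne'
      · -- equal lengths
        rw [heq, Nat.sub_self, List.replicate_zero, List.append_nil] at hf
        have hperm' : ds.Perm Y' := by
          simpa [heq, Nat.sub_self] using hperm
        show x = y ∧ ∃ ds', ds.Perm ds' ∧ List.Forall₂ (RTree.equivAux n) cs ds'
        refine ⟨hxy, Y', hperm', ?_⟩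
        apply forall₂_mem_imp hf
        intro a haM b hbM h0'
        exact ih a b (hacs a haM) (hbds b ((hperm'.mem_iff).mpr hbM))
          (max_le (le_trans (depth_le_depthList haM) hdLcs)
            (le_trans (depth_le_depthList ((hperm'.mem_iff).mpr hbM)) hdLds)) h0'
      · exfalso
        have hbl : RTree.blank ∈ Y' := by
          apply (hperm.mem_iff).mp
          apply List.mem_append_right
          exact List.mem_replicate.mpr ⟨by omega, rfl⟩
        obtain ⟨a, haX, hzero⟩ := forall₂_mem_right hf _ hbl
        have hacs' : a ∈ cs := by
          simpa [Nat.sub_eq_zero_of_le hgt.le] using haX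
        exact absurd hzero (tdAux_blank_right_pos w hw' (hacs a hacs') hn1).ne'
    · -- shallow case: both trees are single nodes
      have h1 : RTree.depthList cs = 0 := by
        rw [hdepa, hdepb] at hD
        omega
      have h2 : RTree.depthList ds = 0 := by
        rw [hdepa, hdepb] at hD
        omega
      rw [depthList_eq_zero h1, depthList_eq_zero h2]
      show x = y ∧ ∃ ds', List.Perm [] ds' ∧ List.Forall₂ (RTree.equivAux n) [] ds'
      exact ⟨hxy, [], List.Perm.refl _, List.Forall₂.nil⟩

end Aux


/-- If no node feature is the zero vector and all weights are positive, then
vanishing tree distance implies the rooted labelled trees are isomorphic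
(equal up to reordering of children), for trees of equal depth. -/
theorem TD_eq_zero_imp_equiv {p : ℕ} (w : ℕ → ℝ) (hw : ∀ l, 0 < w l)
    (Ta Tb : RTree p) (ha : RTree.NoZero Ta) (hb : RTree.NoZero Tb)
    (hd : Ta.depth = Tb.depth) (h0 : RTree.TD w Ta Tb = 0) :
    RTree.Equiv' Ta Tb :=
  tdAux_zero_equiv w hw _ Ta Tb ha hb (le_refl _) h0

end
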